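/- Let W, q, P, E₀ be as in the Gallager setup, and let X̃ be an independent copy of the input distributed according to q, independent of (X,Y). For the wrong-path metric γ̃ = log₂(W(Y|X̃)/P(Y)) - b and any r ∈ (0,1), log₂ E[2^{r γ̃}] ≤ -r b - r E₀((1-r)/r). -/

import Mathlib

open Finset

/-- Lemma 2: upper bound on the semi-invariant MGF of the wrong-path metric
`γ̃ = log₂(W(Y|X̃)/P(Y)) - b`, where `X̃ ~ q` is independent of `(X,Y) ~ q·W`:
for `r ∈ (0,1)`, `log₂ E[2^{r γ̃}] ≤ -r b - r E₀((1-r)/r)`. -/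
theorem mgf_wrong_path_le_gallager
    {𝒳 𝒴 : Type*} [Fintype 𝒳] [Fintype 𝒴]
    (W : 𝒳 → 𝒴 → ℝ) (q : 𝒳 → ℝ) (b r : ℝ)
    (hW : ∀ x y, 0 < W x y) (hWrow : ∀ x, ∑ y, W x y = 1)
    (hq : ∀ x, 0 ≤ q x) (hq1 : ∑ x, q x = 1)
    (P : 𝒴 → ℝ) (hP : ∀ y, P y = ∑ x, q x * W x y)
    (hPpos : ∀ y, 0 < P y)
    (E₀ : ℝ → ℝ)
    (hE₀ : ∀ ρ, E₀ ρ =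
      -Real.logb 2 (∑ y, (∑ x, q x * W x y ^ (1 / (1 + ρ))) ^ (1 + ρ)))
    (hr : r ∈ Set.Ioo (0 : ℝ) 1) :
    Real.logb 2
        (∑ xt, ∑ x, ∑ y, q xt * q x * W x y *
          (2 : ℝ) ^ (r * (Real.logb 2 (W xt y / P y) - b)))
      ≤ -r * b - r * E₀ ((1 - r) / r) := by
  obtain ⟨hr0, hr1⟩ := hr
  have h1r : 0 < 1 - r := by linarith
  set A : 𝒴 → ℝ := fun y => ∑ x, q x * W x y ^ r with hAdef
  have hqx : ∃ x, 0 < q x := by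
    by_contra h
    push_neg at h
    have : (∑ x, q x) ≤ 0 := Finset.sum_nonpos fun x _ => h x
    linarith
  obtain ⟨x0, hx0⟩ := hqx
  have hApos : ∀ y, 0 < A y := fun y =>
    Finset.sum_pos' (fun x _ => mul_nonneg (hq x) (Real.rpow_nonneg (hW x y).le r))
      ⟨x0, Finset.mem_univ _, mul_pos hx0 (Real.rpow_pos_of_pos (hW x0 y) r)⟩
  have hY : Nonempty 𝒴 := by
    by_contra h
    rw [not_nonempty_iff] at h
    have h2 := hWrow x0
    rw [Finset.univ_eq_empty, Finset.sum_empty] at h2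
    norm_num at h2
  have hYne : (Finset.univ : Finset 𝒴).Nonempty := Finset.univ_nonempty
  have key : ∀ (xt : 𝒳) (y : 𝒴),
      (2 : ℝ) ^ (r * (Real.logb 2 (W xt y / P y) - b)) =
        W xt y ^ r * (P y ^ (-r) * (2 : ℝ) ^ (-(r * b))) := by
    intro xt y
    have hdiv : 0 < W xt y / P y := div_pos (hW xt y) (hPpos y)
    have hexp : r * (Real.logb 2 (W xt y / P y) - b)
        = Real.logb 2 (W xt y / P y) * r + -(r * b) := by ring
    rw [hexp, Real.rpow_add two_pos, Real.rpow_mul (by norm_num : (0:ℝ) ≤ 2),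
      Real.rpow_logb two_pos (by norm_num) hdiv,
      Real.div_rpow (hW xt y).le (hPpos y).le, div_eq_mul_inv,
      ← Real.rpow_neg (hPpos y).le]
    ring
  have hS : (∑ xt, ∑ x, ∑ y, q xt * q x * W x y *
        (2 : ℝ) ^ (r * (Real.logb 2 (W xt y / P y) - b))) =
      (2 : ℝ) ^ (-(r * b)) * ∑ y, P y ^ (1 - r) * A y := by
    have step1 : ∀ (xt x : 𝒳) (y : 𝒴), q xt * q x * W x y *
        (2 : ℝ) ^ (r * (Real.logb 2 (W xt y / P y) - b)) =
        (q xt * W xt y ^ r) * ((q x * W x y) * (P y ^ (-r) * (2 : ℝ) ^ (-(r * b)))) := by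
      intro xt x y; rw [key]; ring
    calc (∑ xt, ∑ x, ∑ y, q xt * q x * W x y *
            (2 : ℝ) ^ (r * (Real.logb 2 (W xt y / P y) - b)))
        = ∑ xt, ∑ x, ∑ y,
            (q xt * W xt y ^ r) * ((q x * W x y) * (P y ^ (-r) * (2 : ℝ) ^ (-(r * b)))) := by
          simp only [step1]
      _ = ∑ xt, ∑ y, ∑ x,
            (q xt * W xt y ^ r) * ((q x * W x y) * (P y ^ (-r) * (2 : ℝ) ^ (-(r * b)))) :=
          Finset.sum_congr rfl fun xt _ => Finset.sum_comm
      _ = ∑ y, ∑ xt, ∑ x,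
            (q xt * W xt y ^ r) * ((q x * W x y) * (P y ^ (-r) * (2 : ℝ) ^ (-(r * b)))) :=
          Finset.sum_comm
      _ = ∑ y, A y * ((P y * (P y ^ (-r) * (2 : ℝ) ^ (-(r * b))))) := by
          refine Finset.sum_congr rfl fun y _ => ?_
          rw [← Finset.sum_mul_sum]
          congr 1
          rw [← Finset.sum_mul, ← hP y]
      _ = (2 : ℝ) ^ (-(r * b)) * ∑ y, P y ^ (1 - r) * A y := by
          rw [Finset.mul_sum]
          refine Finset.sum_congr rfl fun y _ => ?_
          have hPy : P y ^ (1 - r) = P y * P y ^ (-r) := by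
            rw [show (1 - r) = 1 + (-r) by ring, Real.rpow_add (hPpos y), Real.rpow_one]
          rw [hPy]; ring
  have hconj : Real.HolderConjugate (1 / (1 - r)) (1 / r) := by
    exact Real.holderConjugate_one_div h1r hr0 (by ring)
  have holder : (∑ y, P y ^ (1 - r) * A y) ≤ (∑ y, A y ^ (1 / r)) ^ r := by
    have h := Real.inner_le_Lp_mul_Lq_of_nonneg Finset.univ hconj
      (f := fun y => P y ^ (1 - r)) (g := A)
      (fun y _ => Real.rpow_nonneg (hPpos y).le _)
      (fun y _ => (hApos y).le)
    rw [one_div_one_div, one_div_one_div] at h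
    have hfp : ∀ y : 𝒴, (P y ^ (1 - r)) ^ (1 / (1 - r)) = P y := by
      intro y
      rw [← Real.rpow_mul (hPpos y).le, mul_one_div_cancel h1r.ne', Real.rpow_one]
    simp only [hfp] at h
    have hPsum : ∑ y, P y = 1 := by
      simp only [hP]
      rw [Finset.sum_comm]
      simp only [← Finset.mul_sum, hWrow, mul_one]
      exact hq1
    rw [hPsum, Real.one_rpow, one_mul] at h
    exact h
  set B := ∑ y, A y ^ (1 / r) with hBdef
  have hBpos : 0 < B := Finset.sum_pos (fun y _ => Real.rpow_pos_of_pos (hApos y) _) hYne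
  have hTpos : 0 < ∑ y, P y ^ (1 - r) * A y :=
    Finset.sum_pos (fun y _ => mul_pos (Real.rpow_pos_of_pos (hPpos y) _) (hApos y)) hYne
  have hc : (0:ℝ) < (2 : ℝ) ^ (-(r * b)) := Real.rpow_pos_of_pos two_pos _
  have hrho1 : 1 + (1 - r) / r = 1 / r := by field_simp; ring
  have hrho2 : 1 / (1 + (1 - r) / r) = r := by rw [hrho1, one_div_one_div]
  rw [hE₀, hrho2, hrho1]
  have hgoalB : (∑ y, (∑ x, q x * W x y ^ r) ^ (1 / r)) = B := rfl
  rw [hgoalB, hS]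
  calc Real.logb 2 ((2 : ℝ) ^ (-(r * b)) * ∑ y, P y ^ (1 - r) * A y)
      ≤ Real.logb 2 ((2 : ℝ) ^ (-(r * b)) * B ^ r) := by
        refine Real.logb_le_logb_of_le one_lt_two (mul_pos hc hTpos) ?_
        exact mul_le_mul_of_nonneg_left holder hc.le
    _ = -(r * b) + r * Real.logb 2 B := by
        rw [Real.logb_mul (ne_of_gt hc) (ne_of_gt (Real.rpow_pos_of_pos hBpos r)),
          Real.logb_rpow two_pos (by norm_num),
          Real.logb_rpow_eq_mul_logb_of_pos hBpos]
    _ = -r * b - r * -Real.logb 2 B := by ring
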